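/- For every k ≥ 1, consider the pair of genomes forming a single cycle with k adjacencies in each genome: on extremities x_1, …, x_{2k}, take Π1 = {{x_{2i-1}, x_{2i}} : 1 ≤ i ≤ k} and Π2 = {{x_{2i}, x_{2i+1}} : 1 ≤ i ≤ k}, indices taken modulo 2k (so the last pair is {x_{2k}, x_1}). Then the number of most parsimonious SCJ scenarios from G1 to G2 equals k · A_{2k-1}, where A_{2k-1} is the number of alternating permutations of size 2k-1. -/

import Mathlib

/-- A genome on an extremity type `V`: a finite set of adjacencies (unordered pairs of
distinct extremities) that are pairwise disjoint (a partial matching). -/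
structure Genome (V : Type*) where
  adj : Finset (Sym2 V)
  not_isDiag : ∀ p ∈ adj, ¬ p.IsDiag
  disj : ∀ p ∈ adj, ∀ q ∈ adj, p ≠ q → ∀ x, x ∈ p → x ∉ q

instance {V : Type*} : Inhabited (Genome V) :=
  ⟨⟨∅, by simp, by simp⟩⟩

variable {V : Type*} [DecidableEq V]

/-- The step from `G` to `G'` is a cut removing the adjacency `p`. -/
def CutsAdj (G G' : Genome V) (p : Sym2 V) : Prop :=
  p ∈ G.adj ∧ G'.adj = G.adj.erase p

/-- The step from `G` to `G'` is a join adding the adjacency `p`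
(validity of `G'` forces `p` to be a pair of distinct, currently unmatched extremities). -/
def JoinsAdj (G G' : Genome V) (p : Sym2 V) : Prop :=
  p ∉ G.adj ∧ G'.adj = insert p G.adj

/-- A single SCJ operation. -/
def SCJStep (G G' : Genome V) : Prop :=
  ∃ p, CutsAdj G G' p ∨ JoinsAdj G G' p

/-- An SCJ scenario from `G1` to `G2`: a finite sequence of genomes starting at `G1`,
ending at `G2`, consecutive ones differing by a single SCJ operation.  A scenario
represented by a list `L` has `L.length - 1` operations. -/
def IsScenario (G1 G2 : Genome V) (L : List (Genome V)) : Prop :=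
  L.head? = some G1 ∧ L.getLast? = some G2 ∧ L.Chain' SCJStep

/-- The SCJ distance: the minimum number of operations in a scenario from `G1` to `G2`. -/
noncomputable def dSCJ (G1 G2 : Genome V) : ℕ :=
  sInf {n | ∃ L, IsScenario G1 G2 L ∧ L.length = n + 1}

/-- A most parsimonious SCJ scenario. -/
def IsMPS (G1 G2 : Genome V) (L : List (Genome V)) : Prop :=
  IsScenario G1 G2 L ∧ L.length = dSCJ G1 G2 + 1

/-- The number of most parsimonious SCJ scenarios from `G1` to `G2`. -/
noncomputable def NumMPS (G1 G2 : Genome V) : ℕ :=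
  {L | IsMPS G1 G2 L}.ncard

/-- The `i`-th step of the scenario `L` (steps indexed from `0`) cuts adjacency `p`. -/
def StepCut (L : List (Genome V)) (i : ℕ) (p : Sym2 V) : Prop :=
  i + 1 < L.length ∧ CutsAdj (L.getD i default) (L.getD (i + 1) default) p

/-- The `i`-th step of the scenario `L` (steps indexed from `0`) joins adjacency `p`. -/
def StepJoin (L : List (Genome V)) (i : ℕ) (p : Sym2 V) : Prop :=
  i + 1 < L.length ∧ JoinsAdj (L.getD i default) (L.getD (i + 1) default) p

/-- `c` is an alternating (up-down) permutation:
`c 0 < c 1 > c 2 < c 3 > …` (i.e. in 1-based notation `c₁ < c₂ > c₃ < …`). -/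
def IsAltPerm {n : ℕ} (c : Equiv.Perm (Fin n)) : Prop :=
  ∀ i : ℕ, ∀ h : i + 1 < n,
    if i % 2 = 0 then c ⟨i, by omega⟩ < c ⟨i + 1, h⟩
    else c ⟨i + 1, h⟩ < c ⟨i, by omega⟩

/-- `A n`, the number of alternating permutations of size `n` (with `A 0 = 1`). -/
noncomputable def altPermCount (n : ℕ) : ℕ :=
  Nat.card {c : Equiv.Perm (Fin n) // IsAltPerm c}

/-! ### Auxiliary development -/

namespace SCJAux

open Finset

theorem Genome.ext' {V : Type*} {G G' : Genome V} (h : G.adj = G'.adj) : G = G' := by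
  cases G; cases G'; simpa using h

/-- The `t`-th adjacency of `G1` (0-indexed): `{2t+1, 2t+2}`. -/
def cutP (t : ℕ) : Sym2 ℕ := s(2*t+1, 2*t+2)

/-- The `t`-th adjacency of `G2` (0-indexed): `{2t+2, (2t+2) mod 2k + 1}`. -/
def joinP (k t : ℕ) : Sym2 ℕ := s(2*t+2, (2*t+2) % (2*k) + 1)

theorem mem_cutP {x t : ℕ} : x ∈ cutP t ↔ x = 2*t+1 ∨ x = 2*t+2 := by
  simp [cutP, Sym2.mem_iff]

theorem joinP_snd {k t : ℕ} (ht : t < k) :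
    (2*t+2) % (2*k) + 1 = if t + 1 = k then 1 else 2*t+3 := by
  split
  · have : 2*t+2 = 2*k := by omega
    simp [this]
  · rw [Nat.mod_eq_of_lt (by omega)]

theorem mem_joinP {k x t : ℕ} (ht : t < k) :
    x ∈ joinP k t ↔ x = 2*t+2 ∨ x = (if t + 1 = k then 1 else 2*t+3) := by
  rw [joinP, Sym2.mem_iff, joinP_snd ht]

theorem cutP_inj {t t' : ℕ} (h : cutP t = cutP t') : t = t' := by
  have := (Sym2.ext_iff.mp h) (2*t+1)
  rw [mem_cutP, mem_cutP] at this
  omega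

theorem joinP_inj {k t t' : ℕ} (ht : t < k) (ht' : t' < k) (h : joinP k t = joinP k t') :
    t = t' := by
  have := (Sym2.ext_iff.mp h) (2*t+2)
  rw [mem_joinP ht, mem_joinP ht'] at this
  split at this <;> split at this <;> omega

theorem cutP_ne_joinP {k t t' : ℕ} (hk : 2 ≤ k) (ht' : t' < k) : cutP t ≠ joinP k t' := by
  intro h
  have h1 := (Sym2.ext_iff.mp h) (2*t+1)
  have h2 := (Sym2.ext_iff.mp h) (2*t+2)
  rw [mem_cutP, mem_joinP ht'] at h1 h2
  split at h1 <;> split at h2 <;> omega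

/-- The conflict structure: an extremity shared between `cutP t` and `joinP k t'`
forces `t = t'` or `t = (t'+1) % k`. -/
theorem cut_join_conflict {k t t' x : ℕ} (ht : t < k) (ht' : t' < k)
    (h1 : x ∈ cutP t) (h2 : x ∈ joinP k t') : t = t' ∨ t = (t' + 1) % k := by
  rw [mem_cutP] at h1
  rw [mem_joinP ht'] at h2
  rcases Nat.lt_or_ge (t'+1) k with h | h
  · rw [Nat.mod_eq_of_lt h]
    split at h2 <;> omega
  · have hk : t' + 1 = k := by omega
    have : (t' + 1) % k = 0 := by rw [hk]; simp
    rw [this]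
    split at h2 <;> omega

/-- The adjacency set of an intermediate genome: cuts in `D` have been performed,
joins in `J` have been performed. -/
def adjSet (k : ℕ) (D J : Finset ℕ) : Finset (Sym2 ℕ) :=
  ((range k \ D).image cutP) ∪ (J.image (joinP k))

/-- Validity of a state `(D, J)`. -/
def ValidDJ (k : ℕ) (D J : Finset ℕ) : Prop :=
  D ⊆ range k ∧ J ⊆ range k ∧ ∀ t ∈ J, t ∈ D ∧ (t + 1) % k ∈ D

theorem cutP_mem_adjSet {k : ℕ} {D J : Finset ℕ} (hk : 2 ≤ k) (hJ : J ⊆ range k) {t : ℕ}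
    (ht : t < k) : cutP t ∈ adjSet k D J ↔ t ∉ D := by
  constructor
  · intro h
    rcases Finset.mem_union.mp h with h | h
    · obtain ⟨t', ht', heq⟩ := Finset.mem_image.mp h
      rw [Finset.mem_sdiff] at ht'
      exact cutP_inj heq ▸ ht'.2
    · obtain ⟨s, hs, heq⟩ := Finset.mem_image.mp h
      exact absurd heq.symm (cutP_ne_joinP hk (Finset.mem_range.mp (hJ hs)))
  · intro h
    exact Finset.mem_union_left _ (Finset.mem_image_of_mem _
      (Finset.mem_sdiff.mpr ⟨Finset.mem_range.mpr ht, h⟩))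

theorem joinP_mem_adjSet {k : ℕ} {D J : Finset ℕ} (hk : 2 ≤ k) (hJ : J ⊆ range k) {t : ℕ}
    (ht : t < k) : joinP k t ∈ adjSet k D J ↔ t ∈ J := by
  constructor
  · intro h
    rcases Finset.mem_union.mp h with h | h
    · obtain ⟨t', ht', heq⟩ := Finset.mem_image.mp h
      exact absurd heq (cutP_ne_joinP hk ht)
    · obtain ⟨s, hs, heq⟩ := Finset.mem_image.mp h
      rwa [← joinP_inj (Finset.mem_range.mp (hJ hs)) ht heq]
  · intro h
    exact Finset.mem_union_right _ (Finset.mem_image_of_mem _ h)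

theorem adjSet_inj {k : ℕ} {D J D' J' : Finset ℕ} (hk : 2 ≤ k)
    (h : ValidDJ k D J) (h' : ValidDJ k D' J') (heq : adjSet k D J = adjSet k D' J') :
    D = D' ∧ J = J' := by
  constructor
  · ext t
    by_cases ht : t < k
    · have e1 := cutP_mem_adjSet hk h.2.1 ht (D := D)
      have e2 := cutP_mem_adjSet hk h'.2.1 ht (D := D')
      rw [heq] at e1
      rw [e2] at e1
      tauto
    · constructor <;> intro hmem
      · exact absurd (Finset.mem_range.mp (h.1 hmem)) ht
      · exact absurd (Finset.mem_range.mp (h'.1 hmem)) ht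
  · ext t
    by_cases ht : t < k
    · have e1 := joinP_mem_adjSet hk h.2.1 ht (D := D)
      have e2 := joinP_mem_adjSet hk h'.2.1 ht (D := D')
      rw [heq] at e1
      rw [e2] at e1
      tauto
    · constructor <;> intro hmem
      · exact absurd (Finset.mem_range.mp (h.2.1 hmem)) ht
      · exact absurd (Finset.mem_range.mp (h'.2.1 hmem)) ht

theorem adjSet_not_isDiag {k : ℕ} {D J : Finset ℕ} (hJ : J ⊆ range k) :
    ∀ p ∈ adjSet k D J, ¬ p.IsDiag := by
  intro p hp
  rcases Finset.mem_union.mp hp with h | h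
  · obtain ⟨t, ht, rfl⟩ := Finset.mem_image.mp h
    rw [cutP, Sym2.mk_isDiag_iff]
    omega
  · obtain ⟨s, hs, rfl⟩ := Finset.mem_image.mp h
    have hsk := Finset.mem_range.mp (hJ hs)
    rw [joinP, Sym2.mk_isDiag_iff, joinP_snd hsk]
    split <;> omega

theorem adjSet_disj {k : ℕ} {D J : Finset ℕ} (hk : 2 ≤ k) (h : ValidDJ k D J) :
    ∀ p ∈ adjSet k D J, ∀ q ∈ adjSet k D J, p ≠ q → ∀ x, x ∈ p → x ∉ q := by
  intro p hp q hq hne x hxp hxq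
  rcases Finset.mem_union.mp hp with hc | hj <;> rcases Finset.mem_union.mp hq with hc' | hj'
  · obtain ⟨t, ht, rfl⟩ := Finset.mem_image.mp hc
    obtain ⟨t', ht', rfl⟩ := Finset.mem_image.mp hc'
    have : t ≠ t' := fun h => hne (by rw [h])
    rw [mem_cutP] at hxp hxq
    omega
  · obtain ⟨t, ht, rfl⟩ := Finset.mem_image.mp hc
    obtain ⟨s, hs, rfl⟩ := Finset.mem_image.mp hj'
    rw [Finset.mem_sdiff, Finset.mem_range] at ht
    have hsk := Finset.mem_range.mp (h.2.1 hs)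
    rcases cut_join_conflict ht.1 hsk hxp hxq with rfl | rfl
    · exact ht.2 (h.2.2 _ hs).1
    · exact ht.2 (h.2.2 _ hs).2
  · obtain ⟨s, hs, rfl⟩ := Finset.mem_image.mp hj
    obtain ⟨t, ht, rfl⟩ := Finset.mem_image.mp hc'
    rw [Finset.mem_sdiff, Finset.mem_range] at ht
    have hsk := Finset.mem_range.mp (h.2.1 hs)
    rcases cut_join_conflict ht.1 hsk hxq hxp with rfl | rfl
    · exact ht.2 (h.2.2 _ hs).1
    · exact ht.2 (h.2.2 _ hs).2
  · obtain ⟨s, hs, rfl⟩ := Finset.mem_image.mp hj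
    obtain ⟨s', hs', rfl⟩ := Finset.mem_image.mp hj'
    have hsk := Finset.mem_range.mp (h.2.1 hs)
    have hsk' := Finset.mem_range.mp (h.2.1 hs')
    have hss : s ≠ s' := fun heq => hne (by rw [heq])
    rw [mem_joinP hsk] at hxp
    rw [mem_joinP hsk'] at hxq
    split at hxp <;> split at hxq <;> omega

open scoped Classical in
/-- The genome given by the state `(D, J)`. -/
noncomputable def mkG (k : ℕ) (D J : Finset ℕ) : Genome ℕ :=
  if h : 2 ≤ k ∧ ValidDJ k D J then
    ⟨adjSet k D J, adjSet_not_isDiag h.2.2.1, adjSet_disj h.1 h.2⟩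
  else default

theorem mkG_adj {k : ℕ} {D J : Finset ℕ} (hk : 2 ≤ k) (h : ValidDJ k D J) :
    (mkG k D J).adj = adjSet k D J := by
  classical
  rw [mkG, dif_pos ⟨hk, h⟩]

/-! ### States from a permutation -/

/-- Extension of a permutation of `Fin (2k)` to `ℕ` (identity outside `[0, 2k)`). -/
def nu (k : ℕ) (τ : Equiv.Perm (Fin (2*k))) (e : ℕ) : ℕ :=
  if h : e < 2*k then (τ ⟨e, h⟩ : ℕ) else e

theorem nu_lt {k : ℕ} {τ : Equiv.Perm (Fin (2*k))} {e : ℕ} (h : e < 2*k) :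
    nu k τ e < 2*k := by
  rw [nu, dif_pos h]; exact (τ ⟨e, h⟩).2

theorem nu_inj {k : ℕ} {τ : Equiv.Perm (Fin (2*k))} {e e' : ℕ} (he : e < 2*k) (he' : e' < 2*k)
    (h : nu k τ e = nu k τ e') : e = e' := by
  unfold nu at h
  rw [dif_pos he, dif_pos he'] at h
  have := τ.injective (Fin.ext h)
  exact Fin.mk.inj_iff.mp this

theorem nu_symm {k : ℕ} {τ : Equiv.Perm (Fin (2*k))} {i : ℕ} (h : i < 2*k) :
    nu k τ ((τ.symm ⟨i, h⟩ : ℕ)) = i := by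
  rw [nu, dif_pos (τ.symm ⟨i, h⟩).2]
  simp

/-- The key property of the event-to-time map: each join happens after the two
adjacent cuts. -/
def Q (k : ℕ) (τ : Equiv.Perm (Fin (2*k))) : Prop :=
  ∀ t, t < k → nu k τ (2*t) < nu k τ (2*t+1) ∧ nu k τ ((2*t+2) % (2*k)) < nu k τ (2*t+1)

/-- Cuts done strictly before time `i`. -/
def Dset (k : ℕ) (τ : Equiv.Perm (Fin (2*k))) (i : ℕ) : Finset ℕ :=
  (range k).filter fun t => nu k τ (2*t) < i

/-- Joins done strictly before time `i`. -/
def Jset (k : ℕ) (τ : Equiv.Perm (Fin (2*k))) (i : ℕ) : Finset ℕ :=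
  (range k).filter fun t => nu k τ (2*t+1) < i

theorem two_mul_mod (a k : ℕ) : (2*a) % (2*k) = 2*(a % k) := Nat.mul_mod_mul_left 2 a k

theorem valid_DJset {k : ℕ} {τ : Equiv.Perm (Fin (2*k))} (hQ : Q k τ) (i : ℕ) :
    ValidDJ k (Dset k τ i) (Jset k τ i) := by
  refine ⟨Finset.filter_subset _ _, Finset.filter_subset _ _, ?_⟩
  intro t ht
  rw [Jset, Finset.mem_filter, Finset.mem_range] at ht
  obtain ⟨h1, h2⟩ := hQ t ht.1
  constructor
  · rw [Dset, Finset.mem_filter, Finset.mem_range]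
    exact ⟨ht.1, lt_trans h1 ht.2⟩
  · rw [Dset, Finset.mem_filter, Finset.mem_range]
    refine ⟨Nat.mod_lt _ (by omega), ?_⟩
    have : 2*((t+1) % k) = (2*t+2) % (2*k) := by
      rw [show 2*t+2 = 2*(t+1) by ring, two_mul_mod]
    rw [this]
    exact lt_trans h2 ht.2

/-- The scenario associated to an event-to-time permutation. -/
noncomputable def scen (k : ℕ) (τ : Equiv.Perm (Fin (2*k))) : List (Genome ℕ) :=
  (List.range (2*k+1)).map fun i => mkG k (Dset k τ i) (Jset k τ i)

theorem scen_length {k : ℕ} (τ : Equiv.Perm (Fin (2*k))) : (scen k τ).length = 2*k + 1 := by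
  simp [scen]

theorem scen_getD {k : ℕ} (τ : Equiv.Perm (Fin (2*k))) {i : ℕ} (h : i < 2*k+1) :
    (scen k τ).getD i default = mkG k (Dset k τ i) (Jset k τ i) := by
  rw [scen, List.getD_eq_getElem?_getD, List.getElem?_map, List.getElem?_range h]
  rfl

/-! ### Step lemmas for `adjSet` -/

theorem adjSet_erase {k : ℕ} {D J : Finset ℕ} (hk : 2 ≤ k) (hJ : J ⊆ range k) {t : ℕ}
    (ht : t < k) :
    adjSet k (insert t D) J = (adjSet k D J).erase (cutP t) := by
  have himg : (range k \ insert t D).image cutP = ((range k \ D).image cutP).erase (cutP t) := by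
    ext p
    rw [Finset.mem_erase, Finset.mem_image, Finset.mem_image]
    constructor
    · rintro ⟨t', ht', rfl⟩
      rw [Finset.mem_sdiff, Finset.mem_insert] at ht'
      refine ⟨fun h => ht'.2 (Or.inl (cutP_inj h)), t', ?_, rfl⟩
      rw [Finset.mem_sdiff]
      tauto
    · rintro ⟨hne, t', ht', rfl⟩
      rw [Finset.mem_sdiff] at ht'
      refine ⟨t', ?_, rfl⟩
      rw [Finset.mem_sdiff, Finset.mem_insert]
      exact ⟨ht'.1, fun h => h.elim (fun h => hne (by rw [h])) ht'.2⟩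
  rw [adjSet, adjSet, himg, Finset.erase_union_distrib]
  congr 1
  rw [Finset.erase_eq_of_notMem]
  intro hmem
  obtain ⟨s, hs, heq⟩ := Finset.mem_image.mp hmem
  exact cutP_ne_joinP hk (Finset.mem_range.mp (hJ hs)) heq.symm

theorem adjSet_insert_join {k : ℕ} {D J : Finset ℕ} {t : ℕ} :
    adjSet k D (insert t J) = insert (joinP k t) (adjSet k D J) := by
  rw [adjSet, adjSet, Finset.image_insert, Finset.union_comm _ (insert _ _),
    Finset.insert_union, Finset.union_comm]

/-! ### The scenario is a valid SCJ scenario -/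

theorem Dset_zero {k : ℕ} (τ : Equiv.Perm (Fin (2*k))) : Dset k τ 0 = ∅ := by
  simp [Dset]

theorem Jset_zero {k : ℕ} (τ : Equiv.Perm (Fin (2*k))) : Jset k τ 0 = ∅ := by
  simp [Jset]

theorem Dset_last {k : ℕ} (τ : Equiv.Perm (Fin (2*k))) : Dset k τ (2*k) = range k := by
  rw [Dset, Finset.filter_true_of_mem]
  intro t ht
  exact nu_lt (by rw [Finset.mem_range] at ht; omega)

theorem Jset_last {k : ℕ} (τ : Equiv.Perm (Fin (2*k))) : Jset k τ (2*k) = range k := by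
  rw [Jset, Finset.filter_true_of_mem]
  intro t ht
  exact nu_lt (by rw [Finset.mem_range] at ht; omega)

/-- The step structure of `Dset`/`Jset` at time `i`: with `e` the event occurring at
time `i`, either `e = 2t` is a cut or `e = 2t+1` is a join. -/
theorem DJset_succ {k : ℕ} (τ : Equiv.Perm (Fin (2*k))) {i : ℕ} (hi : i < 2*k) :
    (∃ t, t < k ∧ nu k τ (2*t) = i ∧ t ∉ Dset k τ i ∧
      Dset k τ (i+1) = insert t (Dset k τ i) ∧ Jset k τ (i+1) = Jset k τ i) ∨
    (∃ t, t < k ∧ nu k τ (2*t+1) = i ∧ t ∉ Jset k τ i ∧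
      Jset k τ (i+1) = insert t (Jset k τ i) ∧ Dset k τ (i+1) = Dset k τ i) := by
  set e : ℕ := (τ.symm ⟨i, hi⟩ : ℕ) with he
  have hek : e < 2*k := (τ.symm ⟨i, hi⟩).2
  have hnue : nu k τ e = i := nu_symm hi
  have huniq : ∀ e', e' < 2*k → nu k τ e' = i → e' = e := by
    intro e' he' hv
    exact nu_inj he' hek (by rw [hv, hnue])
  rcases Nat.even_or_odd e with ⟨t, het⟩ | ⟨t, het⟩
  · left
    refine ⟨t, by omega, by rw [show 2*t = e by omega]; exact hnue, ?_, ?_, ?_⟩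
    · rw [Dset, Finset.mem_filter]
      rw [show 2*t = e by omega]
      omega
    · ext s
      simp only [Dset, Finset.mem_insert, Finset.mem_filter, Finset.mem_range]
      constructor
      · rintro ⟨hs, hlt⟩
        rcases Nat.lt_or_ge (nu k τ (2*s)) i with h | h
        · exact Or.inr ⟨hs, h⟩
        · have : nu k τ (2*s) = i := by omega
          have := huniq _ (by omega) this
          left; omega
      · rintro (rfl | ⟨hs, hlt⟩)
        · rw [show 2*s = e by omega]
          omega
        · exact ⟨hs, by omega⟩
    · ext s
      simp only [Jset, Finset.mem_filter, Finset.mem_range]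
      constructor
      · rintro ⟨hs, hlt⟩
        rcases Nat.lt_or_ge (nu k τ (2*s+1)) i with h | h
        · exact ⟨hs, h⟩
        · have : nu k τ (2*s+1) = i := by omega
          have := huniq _ (by omega) this
          omega
      · rintro ⟨hs, hlt⟩
        exact ⟨hs, by omega⟩
  · right
    refine ⟨t, by omega, by rw [show 2*t+1 = e by omega]; exact hnue, ?_, ?_, ?_⟩
    · rw [Jset, Finset.mem_filter]
      rw [show 2*t+1 = e by omega]
      omega
    · ext s
      simp only [Jset, Finset.mem_insert, Finset.mem_filter, Finset.mem_range]
      constructor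
      · rintro ⟨hs, hlt⟩
        rcases Nat.lt_or_ge (nu k τ (2*s+1)) i with h | h
        · exact Or.inr ⟨hs, h⟩
        · have : nu k τ (2*s+1) = i := by omega
          have := huniq _ (by omega) this
          left; omega
      · rintro (rfl | ⟨hs, hlt⟩)
        · rw [show 2*s+1 = e by omega]
          omega
        · exact ⟨hs, by omega⟩
    · ext s
      simp only [Dset, Finset.mem_filter, Finset.mem_range]
      constructor
      · rintro ⟨hs, hlt⟩
        rcases Nat.lt_or_ge (nu k τ (2*s)) i with h | h
        · exact ⟨hs, h⟩
        · have : nu k τ (2*s) = i := by omega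
          have := huniq _ (by omega) this
          omega
      · rintro ⟨hs, hlt⟩
        exact ⟨hs, by omega⟩

theorem scen_head {k : ℕ} (τ : Equiv.Perm (Fin (2*k))) :
    (scen k τ).head? = some (mkG k (Dset k τ 0) (Jset k τ 0)) := by
  rw [List.head?_eq_getElem?, scen, List.getElem?_map, List.getElem?_range (by omega)]
  rfl

theorem scen_last {k : ℕ} (τ : Equiv.Perm (Fin (2*k))) :
    (scen k τ).getLast? = some (mkG k (Dset k τ (2*k)) (Jset k τ (2*k))) := by
  rw [scen, List.range_succ, List.map_append]
  simp

theorem scen_chain {k : ℕ} (hk : 2 ≤ k) {τ : Equiv.Perm (Fin (2*k))} (hQ : Q k τ) :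
    (scen k τ).Chain' SCJStep := by
  rw [scen, List.Chain', List.isChain_map, List.isChain_range_succ]
  intro i hi
  have V := valid_DJset hQ i
  have V' := valid_DJset hQ (i+1)
  rcases DJset_succ τ hi with ⟨t, htk, hnu, htD, hD, hJ⟩ | ⟨t, htk, hnu, htJ, hJ, hD⟩
  · refine ⟨cutP t, Or.inl ⟨?_, ?_⟩⟩
    · rw [mkG_adj hk V]
      exact (cutP_mem_adjSet hk V.2.1 htk).mpr htD
    · rw [mkG_adj hk V', mkG_adj hk V, hD, hJ, adjSet_erase hk V.2.1 htk]
  · refine ⟨joinP k t, Or.inr ⟨?_, ?_⟩⟩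
    · rw [mkG_adj hk V]
      exact fun h => htJ ((joinP_mem_adjSet hk V.2.1 htk).mp h)
    · rw [mkG_adj hk V', mkG_adj hk V, hD, hJ, adjSet_insert_join]

/-! ### Identification of `G1`, `G2` -/

theorem G1_adj_eq {k : ℕ} {G1 : Genome ℕ}
    (h1 : G1.adj = (Finset.Icc 1 k).image fun t => s(2 * t - 1, 2 * t)) :
    G1.adj = adjSet k ∅ ∅ := by
  rw [h1, adjSet]
  simp only [Finset.sdiff_empty, Finset.image_empty, Finset.union_empty]
  ext p
  simp only [Finset.mem_image, Finset.mem_Icc, Finset.mem_range]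
  constructor
  · rintro ⟨t, ⟨ht1, ht2⟩, rfl⟩
    refine ⟨t - 1, by omega, ?_⟩
    rw [cutP, show 2*(t-1)+1 = 2*t-1 by omega, show 2*(t-1)+2 = 2*t by omega]
  · rintro ⟨t, ht, rfl⟩
    refine ⟨t + 1, by omega, ?_⟩
    rw [cutP, show 2*(t+1)-1 = 2*t+1 by omega, show 2*(t+1) = 2*t+2 by omega]

theorem G2_adj_eq {k : ℕ} {G2 : Genome ℕ}
    (h2 : G2.adj = (Finset.Icc 1 k).image fun t => s(2 * t, (2 * t) % (2 * k) + 1)) :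
    G2.adj = adjSet k (range k) (range k) := by
  rw [h2, adjSet]
  simp only [Finset.sdiff_self, Finset.image_empty, Finset.empty_union]
  ext p
  simp only [Finset.mem_image, Finset.mem_Icc, Finset.mem_range]
  constructor
  · rintro ⟨t, ⟨ht1, ht2⟩, rfl⟩
    refine ⟨t - 1, by omega, ?_⟩
    rw [joinP, show 2*(t-1)+2 = 2*t by omega]
  · rintro ⟨t, ht, rfl⟩
    refine ⟨t + 1, by omega, ?_⟩
    rw [joinP, show 2*(t+1) = 2*t+2 by omega]

/-! ### Distance -/

theorem step_symmDiff_card {G G' : Genome ℕ} (h : SCJStep G G') :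
    (symmDiff G.adj G'.adj).card = 1 := by
  obtain ⟨p, ⟨hp, heq⟩ | ⟨hp, heq⟩⟩ := h
  · have : symmDiff G.adj G'.adj = {p} := by
      rw [heq]
      ext x
      simp only [Finset.mem_symmDiff, Finset.mem_erase, Finset.mem_singleton]
      constructor
      · rintro (⟨h1, h2⟩ | ⟨⟨h1, h2⟩, h3⟩) <;> tauto
      · rintro rfl; tauto
    rw [this, Finset.card_singleton]
  · have : symmDiff G.adj G'.adj = {p} := by
      rw [heq]
      ext x
      simp only [Finset.mem_symmDiff, Finset.mem_insert, Finset.mem_singleton]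
      constructor
      · rintro (⟨h1, h2⟩ | ⟨h1, h2⟩) <;> tauto
      · rintro rfl; tauto
    rw [this, Finset.card_singleton]

theorem symmDiff_card_triangle (A B C : Finset (Sym2 ℕ)) :
    (symmDiff A C).card ≤ (symmDiff A B).card + (symmDiff B C).card := by
  refine le_trans (Finset.card_le_card ?_) (Finset.card_union_le _ _)
  intro x hx
  simp only [Finset.mem_symmDiff, Finset.mem_union] at *
  tauto

theorem getD_eq_get {L : List (Genome ℕ)} {i : ℕ} (h : i < L.length) :
    L.getD i default = L.get ⟨i, h⟩ := by
  rw [List.getD_eq_getElem?_getD, List.getElem?_eq_getElem h]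
  rfl

theorem chain_step {L : List (Genome ℕ)} (hc : L.Chain' SCJStep) {i : ℕ}
    (h : i + 1 < L.length) :
    SCJStep (L.getD i default) (L.getD (i+1) default) := by
  rw [getD_eq_get (by omega), getD_eq_get h]
  exact List.isChain_iff_getElem.mp hc i (by omega)

theorem chain_symmDiff_getD {L : List (Genome ℕ)} (hc : L.Chain' SCJStep) {i j : ℕ}
    (hij : i ≤ j) (hj : j < L.length) :
    (symmDiff (L.getD i default).adj (L.getD j default).adj).card ≤ j - i := by
  induction j, hij using Nat.le_induction with
  | base => simp [symmDiff_self]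
  | succ j hij ih =>
    calc (symmDiff (L.getD i default).adj (L.getD (j+1) default).adj).card
        ≤ (symmDiff (L.getD i default).adj (L.getD j default).adj).card
          + (symmDiff (L.getD j default).adj (L.getD (j+1) default).adj).card :=
          symmDiff_card_triangle _ _ _
      _ ≤ (j - i) + 1 := by
          have h1 := ih (by omega)
          have h2 := step_symmDiff_card (chain_step hc hj)
          omega
      _ ≤ (j + 1) - i := by omega

theorem scenario_getD_head {G1 G2 : Genome ℕ} {L : List (Genome ℕ)}
    (hs : IsScenario G1 G2 L) : L.getD 0 default = G1 := by
  have h0 : 0 < L.length := by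
    cases L with
    | nil => simp [IsScenario] at hs
    | cons a l => simp
  rw [getD_eq_get h0]
  have := hs.1
  rw [List.head?_eq_getElem?, List.getElem?_eq_getElem h0] at this
  simpa using this

theorem scenario_getD_last {G1 G2 : Genome ℕ} {L : List (Genome ℕ)}
    (hs : IsScenario G1 G2 L) : L.getD (L.length - 1) default = G2 := by
  have h0 : 0 < L.length := by
    cases L with
    | nil => simp [IsScenario] at hs
    | cons a l => simp
  rw [getD_eq_get (by omega)]
  have := hs.2.1
  rw [List.getLast?_eq_getElem?, List.getElem?_eq_getElem (by omega)] at this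
  simpa using this

theorem scenario_lower {G1 G2 : Genome ℕ} {L : List (Genome ℕ)} {n : ℕ}
    (hs : IsScenario G1 G2 L) (hlen : L.length = n + 1) :
    (symmDiff G1.adj G2.adj).card ≤ n := by
  have := chain_symmDiff_getD hs.2.2 (Nat.zero_le n) (by omega)
  rw [scenario_getD_head hs] at this
  have hl := scenario_getD_last hs
  rw [hlen] at hl
  simp only [Nat.add_sub_cancel] at hl
  rw [hl] at this
  simpa using this

theorem symmDiff_G1_G2 {k : ℕ} (hk : 2 ≤ k) {G1 G2 : Genome ℕ}
    (hG1 : G1.adj = adjSet k ∅ ∅) (hG2 : G2.adj = adjSet k (range k) (range k)) :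
    (symmDiff G1.adj G2.adj).card = 2 * k := by
  have hA : adjSet k ∅ ∅ = (range k).image cutP := by
    rw [adjSet]
    simp
  have hB : adjSet k (range k) (range k) = (range k).image (joinP k) := by
    rw [adjSet]
    simp
  rw [hG1, hG2, hA, hB]
  have hdisj : Disjoint ((range k).image cutP) ((range k).image (joinP k)) := by
    rw [Finset.disjoint_left]
    intro p hp hq
    obtain ⟨t, ht, rfl⟩ := Finset.mem_image.mp hp
    obtain ⟨s, hs, heq⟩ := Finset.mem_image.mp hq
    exact cutP_ne_joinP hk (Finset.mem_range.mp hs) heq.symm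
  rw [hdisj.symmDiff_eq_sup, Finset.sup_eq_union, Finset.card_union_of_disjoint hdisj,
    Finset.card_image_of_injOn (fun a _ b _ h => cutP_inj h),
    Finset.card_image_of_injOn (fun a ha b hb h =>
      joinP_inj (Finset.mem_range.mp ha) (Finset.mem_range.mp hb) h),
    Finset.card_range]
  ring

/-! ### A canonical optimal permutation -/

def tau0fun (k : ℕ) (e : Fin (2*k)) : Fin (2*k) :=
  ⟨if (e : ℕ) % 2 = 0 then (e : ℕ)/2 else k + (e : ℕ)/2, by
    have := e.isLt
    split <;> omega⟩

theorem tau0fun_inj (k : ℕ) : Function.Injective (tau0fun k) := by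
  intro e e' h
  have h2 := congrArg Fin.val h
  simp only [tau0fun] at h2
  have he := e.isLt
  have he' := e'.isLt
  apply Fin.ext
  split at h2 <;> split at h2 <;> omega

noncomputable def tau0 (k : ℕ) : Equiv.Perm (Fin (2*k)) :=
  Equiv.ofBijective _ ((Finite.injective_iff_bijective).mp (tau0fun_inj k))

theorem nu_tau0 {k : ℕ} {e : ℕ} (he : e < 2*k) :
    nu k (tau0 k) e = if e % 2 = 0 then e/2 else k + e/2 := by
  rw [nu, dif_pos he]
  rfl

theorem Q_tau0 (k : ℕ) (hk : 1 ≤ k) : Q k (tau0 k) := by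
  intro t ht
  rw [nu_tau0 (by omega), nu_tau0 (by omega), nu_tau0 (Nat.mod_lt _ (by omega))]
  rw [show 2*t+2 = 2*(t+1) by ring, two_mul_mod]
  have h1 : (2*t) % 2 = 0 := by omega
  have h2 : ¬ ((2*t+1) % 2 = 0) := by omega
  have h3 : (2*((t+1) % k)) % 2 = 0 := by omega
  rw [if_pos h1, if_neg h2, if_pos h3]
  have := Nat.mod_lt (t+1) (show 0 < k by omega)
  omega

theorem validEmpty (k : ℕ) : ValidDJ k ∅ ∅ :=
  ⟨Finset.empty_subset _, Finset.empty_subset _, by simp⟩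

theorem validFull {k : ℕ} (hk : 1 ≤ k) : ValidDJ k (range k) (range k) :=
  ⟨le_refl _, le_refl _, fun t ht => ⟨ht, Finset.mem_range.mpr (Nat.mod_lt _ (by omega))⟩⟩

theorem scen_isScenario {k : ℕ} (hk : 2 ≤ k) {τ : Equiv.Perm (Fin (2*k))} (hQ : Q k τ)
    {G1 G2 : Genome ℕ} (hG1 : G1.adj = adjSet k ∅ ∅)
    (hG2 : G2.adj = adjSet k (range k) (range k)) :
    IsScenario G1 G2 (scen k τ) := by
  refine ⟨?_, ?_, scen_chain hk hQ⟩
  · rw [scen_head, Dset_zero, Jset_zero]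
    congr 1
    exact (Genome.ext' (by rw [mkG_adj hk (validEmpty k), ← hG1])).symm
  · rw [scen_last, Dset_last, Jset_last]
    congr 1
    exact (Genome.ext' (by rw [mkG_adj hk (validFull (by omega)), ← hG2])).symm

theorem dSCJ_eq {k : ℕ} (hk : 2 ≤ k) {G1 G2 : Genome ℕ}
    (hG1 : G1.adj = adjSet k ∅ ∅) (hG2 : G2.adj = adjSet k (range k) (range k)) :
    dSCJ G1 G2 = 2 * k := by
  have hmem : 2*k ∈ {n | ∃ L, IsScenario G1 G2 L ∧ L.length = n + 1} :=
    ⟨scen k (tau0 k), scen_isScenario hk (Q_tau0 k (by omega)) hG1 hG2, scen_length _⟩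
  apply le_antisymm
  · exact Nat.sInf_le hmem
  · apply le_csInf ⟨_, hmem⟩
    rintro n ⟨L, hsc, hlen⟩
    have := scenario_lower hsc hlen
    rwa [symmDiff_G1_G2 hk hG1 hG2] at this

theorem isMPS_iff {k : ℕ} (hk : 2 ≤ k) {G1 G2 : Genome ℕ}
    (hG1 : G1.adj = adjSet k ∅ ∅) (hG2 : G2.adj = adjSet k (range k) (range k))
    (L : List (Genome ℕ)) :
    IsMPS G1 G2 L ↔ IsScenario G1 G2 L ∧ L.length = 2*k + 1 := by
  rw [IsMPS, dSCJ_eq hk hG1 hG2]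

theorem nu_coe {k : ℕ} {τ : Equiv.Perm (Fin (2*k))} (e : Fin (2*k)) :
    nu k τ (e : ℕ) = (τ e : ℕ) := by
  rw [nu, dif_pos e.isLt, Fin.eta]

theorem scen_inj {k : ℕ} (hk : 2 ≤ k) {τ τ' : Equiv.Perm (Fin (2*k))}
    (hQ : Q k τ) (hQ' : Q k τ') (h : scen k τ = scen k τ') : τ = τ' := by
  have hsets : ∀ i, i < 2*k+1 → Dset k τ i = Dset k τ' i ∧ Jset k τ i = Jset k τ' i := by
    intro i hi
    have h2 := congrArg (fun L => List.getD L i default) h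
    rw [scen_getD τ hi, scen_getD τ' hi] at h2
    have h3 := congrArg Genome.adj h2
    rw [mkG_adj hk (valid_DJset hQ i), mkG_adj hk (valid_DJset hQ' i)] at h3
    exact adjSet_inj hk (valid_DJset hQ i) (valid_DJset hQ' i) h3
  have key : ∀ e, e < 2*k → nu k τ e = nu k τ' e := by
    intro e he
    have hb := nu_lt (τ := τ) he
    have hb' := nu_lt (τ := τ') he
    rcases Nat.even_or_odd e with ⟨t, het⟩ | ⟨t, het⟩
    · have ht : t < k := by omega
      have mem : ∀ i, i < 2*k+1 → ((t ∈ Dset k τ i) ↔ (t ∈ Dset k τ' i)) := by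
        intro i hi
        rw [(hsets i hi).1]
      simp only [Dset, Finset.mem_filter, Finset.mem_range] at mem
      have he2 : 2*t = e := by omega
      rw [he2] at mem
      have m1 := mem (nu k τ e + 1) (by omega)
      have m2 := mem (nu k τ' e + 1) (by omega)
      omega
    · have ht : t < k := by omega
      have mem : ∀ i, i < 2*k+1 → ((t ∈ Jset k τ i) ↔ (t ∈ Jset k τ' i)) := by
        intro i hi
        rw [(hsets i hi).2]
      simp only [Jset, Finset.mem_filter, Finset.mem_range] at mem
      have he2 : 2*t+1 = e := by omega
      rw [he2] at mem
      have m1 := mem (nu k τ e + 1) (by omega)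
      have m2 := mem (nu k τ' e + 1) (by omega)
      omega
  apply Equiv.ext
  intro e
  apply Fin.ext
  rw [← nu_coe e, ← nu_coe e]
  exact key _ e.isLt

/-! ### Step analysis helpers -/

theorem singleton_symmDiff_not_mem {X : Finset (Sym2 ℕ)} {p : Sym2 ℕ} (hp : p ∉ X) :
    symmDiff {p} X = insert p X := by
  ext x
  simp only [Finset.mem_symmDiff, Finset.mem_singleton, Finset.mem_insert]
  constructor
  · rintro (⟨rfl, h⟩ | ⟨h1, h2⟩) <;> tauto
  · rintro (rfl | h) <;> [tauto; exact Or.inr ⟨h, fun heq => hp (heq ▸ h)⟩]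

theorem step_eq_symmDiff {G G' : Genome ℕ} {p : Sym2 ℕ}
    (h : CutsAdj G G' p ∨ JoinsAdj G G' p) :
    G'.adj = symmDiff G.adj {p} := by
  rcases h with ⟨hp, heq⟩ | ⟨hp, heq⟩
  · rw [heq]
    ext x
    simp only [Finset.mem_symmDiff, Finset.mem_erase, Finset.mem_singleton]
    constructor
    · rintro ⟨h1, h2⟩; tauto
    · rintro (⟨h1, h2⟩ | ⟨h1, h2⟩)
      · exact ⟨h2, h1⟩
      · exact absurd (h1 ▸ hp) h2
  · rw [heq]
    ext x
    simp only [Finset.mem_symmDiff, Finset.mem_insert, Finset.mem_singleton]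
    constructor
    · rintro (rfl | h) <;> [exact Or.inr ⟨rfl, hp⟩; exact Or.inl ⟨h, fun heq => hp (heq ▸ h)⟩]
    · rintro (⟨h1, h2⟩ | ⟨rfl, h2⟩) <;> tauto

theorem filter_cut_adjSet {k : ℕ} {D J : Finset ℕ} (hk : 2 ≤ k) (hV : ValidDJ k D J) :
    ((range k).filter fun t => cutP t ∉ adjSet k D J) = D := by
  ext t
  rw [Finset.mem_filter, Finset.mem_range]
  constructor
  · rintro ⟨ht, h⟩
    by_contra htD
    exact h ((cutP_mem_adjSet hk hV.2.1 ht).mpr htD)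
  · intro htD
    have ht := Finset.mem_range.mp (hV.1 htD)
    exact ⟨ht, fun h => (cutP_mem_adjSet hk hV.2.1 ht).mp h htD⟩

theorem filter_join_adjSet {k : ℕ} {D J : Finset ℕ} (hk : 2 ≤ k) (hV : ValidDJ k D J) :
    ((range k).filter fun t => joinP k t ∈ adjSet k D J) = J := by
  ext t
  rw [Finset.mem_filter, Finset.mem_range]
  constructor
  · rintro ⟨ht, h⟩
    exact (joinP_mem_adjSet hk hV.2.1 ht).mp h
  · intro htJ
    have ht := Finset.mem_range.mp (hV.2.1 htJ)
    exact ⟨ht, (joinP_mem_adjSet hk hV.2.1 ht).mpr htJ⟩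

theorem valid_insert_D {k : ℕ} {D J : Finset ℕ} (hV : ValidDJ k D J) {t : ℕ} (ht : t < k) :
    ValidDJ k (insert t D) J :=
  ⟨Finset.insert_subset (Finset.mem_range.mpr ht) hV.1, hV.2.1,
   fun s hs => ⟨Finset.mem_insert_of_mem (hV.2.2 s hs).1,
     Finset.mem_insert_of_mem (hV.2.2 s hs).2⟩⟩

theorem valid_insert_J {k : ℕ} {D J : Finset ℕ} (hV : ValidDJ k D J) {s : ℕ} (hs : s < k)
    (h1 : s ∈ D) (h2 : (s+1) % k ∈ D) : ValidDJ k D (insert s J) := by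
  refine ⟨hV.1, Finset.insert_subset (Finset.mem_range.mpr hs) hV.2.1, ?_⟩
  intro t ht
  rcases Finset.mem_insert.mp ht with rfl | ht
  · exact ⟨h1, h2⟩
  · exact hV.2.2 t ht

theorem join_valid_of_genome {k : ℕ} (hk : 2 ≤ k) {D J : Finset ℕ} (hV : ValidDJ k D J)
    {s : ℕ} (hs : s < k) (G' : Genome ℕ)
    (hadj : G'.adj = insert (joinP k s) (adjSet k D J)) :
    s ∈ D ∧ (s+1) % k ∈ D := by
  constructor
  · by_contra hsD
    have hcut : cutP s ∈ adjSet k D J := (cutP_mem_adjSet hk hV.2.1 hs).mpr hsD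
    have h1 : joinP k s ∈ G'.adj := by rw [hadj]; exact Finset.mem_insert_self _ _
    have h2 : cutP s ∈ G'.adj := by rw [hadj]; exact Finset.mem_insert_of_mem hcut
    exact G'.disj _ h2 _ h1 (cutP_ne_joinP hk hs) (2*s+2) (mem_cutP.mpr (Or.inr rfl))
      ((mem_joinP hs).mpr (Or.inl rfl))
  · by_contra hsD
    have hmod : (s+1) % k < k := Nat.mod_lt _ (by omega)
    have hcut : cutP ((s+1)%k) ∈ adjSet k D J := (cutP_mem_adjSet hk hV.2.1 hmod).mpr hsD
    have h1 : joinP k s ∈ G'.adj := by rw [hadj]; exact Finset.mem_insert_self _ _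
    have h2 : cutP ((s+1)%k) ∈ G'.adj := by rw [hadj]; exact Finset.mem_insert_of_mem hcut
    refine G'.disj _ h2 _ h1 (cutP_ne_joinP hk hs)
      (if s + 1 = k then 1 else 2*s+3) ?_ ((mem_joinP hs).mpr (Or.inr rfl))
    rw [mem_cutP]
    left
    rcases Nat.lt_or_ge (s+1) k with h | h
    · rw [Nat.mod_eq_of_lt h, if_neg (by omega)]
      ring
    · have hsk : s + 1 = k := by omega
      rw [hsk, Nat.mod_self, if_pos rfl]

theorem step_analysis {k : ℕ} (hk : 2 ≤ k) {G G' G2 : Genome ℕ} {D J : Finset ℕ}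
    (hV : ValidDJ k D J) (hadj : G.adj = adjSet k D J)
    (hG2 : G2.adj = adjSet k (range k) (range k))
    (hstep : SCJStep G G') {m : ℕ}
    (hXcard : (symmDiff G.adj G2.adj).card = m + 1)
    (hYcard : (symmDiff G'.adj G2.adj).card = m) :
    (∃ t, t < k ∧ t ∉ D ∧ G'.adj = adjSet k (insert t D) J) ∨
    (∃ s, s < k ∧ s ∉ J ∧ s ∈ D ∧ (s+1) % k ∈ D ∧ G'.adj = adjSet k D (insert s J)) := by
  have hG2img : G2.adj = (range k).image (joinP k) := by
    rw [hG2, adjSet]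
    simp
  obtain ⟨p, hp⟩ := hstep
  have hGadj' : G'.adj = symmDiff G.adj {p} := step_eq_symmDiff hp
  have hY : symmDiff G'.adj G2.adj = symmDiff {p} (symmDiff G.adj G2.adj) := by
    rw [hGadj', symmDiff_comm G.adj ({p} : Finset (Sym2 ℕ)), symmDiff_assoc]
  have hpX : p ∈ symmDiff G.adj G2.adj := by
    by_contra hpX
    rw [hY, singleton_symmDiff_not_mem hpX, Finset.card_insert_of_notMem hpX] at hYcard
    omega
  rcases Finset.mem_symmDiff.mp hpX with ⟨hpG, hpG2⟩ | ⟨hpG2, hpG⟩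
  · -- cut case
    have hpcut : p ∈ (range k \ D).image cutP := by
      rcases Finset.mem_union.mp (hadj ▸ hpG) with h | h
      · exact h
      · exfalso
        obtain ⟨s, hsJ, rfl⟩ := Finset.mem_image.mp h
        apply hpG2
        rw [hG2img]
        exact Finset.mem_image_of_mem _ (hV.2.1 hsJ)
    obtain ⟨t, ht, rfl⟩ := Finset.mem_image.mp hpcut
    rw [Finset.mem_sdiff, Finset.mem_range] at ht
    left
    refine ⟨t, ht.1, ht.2, ?_⟩
    rw [adjSet_erase hk hV.2.1 ht.1, ← hadj]
    rcases hp with ⟨_, heq⟩ | ⟨hnp, _⟩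
    · exact heq
    · exact absurd hpG hnp
  · -- join case
    obtain ⟨s, hsr, rfl⟩ := Finset.mem_image.mp (hG2img ▸ hpG2)
    have hs := Finset.mem_range.mp hsr
    have hsJ : s ∉ J := fun h => hpG (hadj ▸ (joinP_mem_adjSet hk hV.2.1 hs).mpr h)
    have heq : G'.adj = insert (joinP k s) (adjSet k D J) := by
      rcases hp with ⟨hmem, _⟩ | ⟨_, heq⟩
      · exact absurd hmem hpG
      · rw [heq, hadj]
    have hval := join_valid_of_genome hk hV hs G' heq
    right
    exact ⟨s, hs, hsJ, hval.1, hval.2, by rw [adjSet_insert_join, heq]⟩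

/-! ### Every optimal scenario comes from a permutation -/

theorem exists_tau_of_scenario {k : ℕ} (hk : 2 ≤ k) {G1 G2 : Genome ℕ}
    (hG1 : G1.adj = adjSet k ∅ ∅) (hG2 : G2.adj = adjSet k (range k) (range k))
    {L : List (Genome ℕ)} (hs : IsScenario G1 G2 L) (hlen : L.length = 2*k+1) :
    ∃ τ : Equiv.Perm (Fin (2*k)), Q k τ ∧ scen k τ = L := by
  classical
  have hc := hs.2.2
  obtain ⟨a, ha⟩ : ∃ a : ℕ → Genome ℕ, ∀ i, a i = L.getD i default := ⟨_, fun _ => rfl⟩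
  have ha0 : a 0 = G1 := by rw [ha]; exact scenario_getD_head hs
  have halast : a (2*k) = G2 := by
    rw [ha]
    have := scenario_getD_last hs
    rw [hlen] at this
    simpa using this
  have htot : (symmDiff G1.adj G2.adj).card = 2*k := symmDiff_G1_G2 hk hG1 hG2
  have hup : ∀ i ≤ 2*k, (symmDiff (a i).adj G2.adj).card = 2*k - i := by
    intro i hi
    have t1 : (symmDiff (L.getD 0 default).adj (L.getD i default).adj).card ≤ i := by
      simpa using chain_symmDiff_getD hc (Nat.zero_le i) (by omega)
    have t2 : (symmDiff (L.getD i default).adj (L.getD (2*k) default).adj).card ≤ 2*k - i :=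
      chain_symmDiff_getD hc hi (by omega)
    rw [← ha, ← ha, ha0] at t1
    rw [← ha, ← ha, halast] at t2
    have tri := symmDiff_card_triangle G1.adj (a i).adj G2.adj
    have tri2 := symmDiff_card_triangle (a i).adj G1.adj G2.adj
    rw [symmDiff_comm (a i).adj G1.adj] at tri2
    omega
  obtain ⟨DD, hDDdef⟩ : ∃ DD : ℕ → Finset ℕ,
      ∀ i, DD i = (range k).filter fun t => cutP t ∉ (a i).adj := ⟨_, fun _ => rfl⟩
  obtain ⟨JJ, hJJdef⟩ : ∃ JJ : ℕ → Finset ℕ,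
      ∀ i, JJ i = (range k).filter fun t => joinP k t ∈ (a i).adj := ⟨_, fun _ => rfl⟩
  have hDD0 : DD 0 = ∅ := by
    rw [hDDdef]
    have h0 : (a 0).adj = adjSet k ∅ ∅ := by rw [ha0, hG1]
    simp only [h0]
    exact filter_cut_adjSet hk (validEmpty k)
  have hJJ0 : JJ 0 = ∅ := by
    rw [hJJdef]
    have h0 : (a 0).adj = adjSet k ∅ ∅ := by rw [ha0, hG1]
    simp only [h0]
    exact filter_join_adjSet hk (validEmpty k)
  have Pex : ∀ i, i ≤ 2*k → ValidDJ k (DD i) (JJ i) ∧ (a i).adj = adjSet k (DD i) (JJ i) := by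
    intro i
    induction i with
    | zero =>
      intro _
      rw [hDD0, hJJ0]
      exact ⟨validEmpty k, by rw [ha0, hG1]⟩
    | succ i ih =>
      intro hi
      obtain ⟨hV, hadj⟩ := ih (by omega)
      have hstep : SCJStep (a i) (a (i+1)) := by
        rw [ha, ha]
        exact chain_step hc (by omega)
      have hX := hup i (by omega)
      have hYc := hup (i+1) (by omega)
      have hX' : (symmDiff (a i).adj G2.adj).card = (2*k - (i+1)) + 1 := by omega
      rcases step_analysis hk hV hadj hG2 hstep hX' hYc with
        ⟨t, htk, htD, hadj'⟩ | ⟨s, hsk, hsJ, hsD, hsD2, hadj'⟩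
      · have hV' := valid_insert_D hV htk
        have hDD' : DD (i+1) = insert t (DD i) := by
          rw [hDDdef]
          simp only [hadj']
          exact filter_cut_adjSet hk hV'
        have hJJ' : JJ (i+1) = JJ i := by
          rw [hJJdef]
          simp only [hadj']
          exact filter_join_adjSet hk hV'
        rw [hDD', hJJ']
        exact ⟨hV', hadj'⟩
      · have hV' := valid_insert_J hV hsk hsD hsD2
        have hDD' : DD (i+1) = DD i := by
          rw [hDDdef]
          simp only [hadj']
          exact filter_cut_adjSet hk hV'
        have hJJ' : JJ (i+1) = insert s (JJ i) := by
          rw [hJJdef]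
          simp only [hadj']
          exact filter_join_adjSet hk hV'
        rw [hDD', hJJ']
        exact ⟨hV', hadj'⟩
  have hstep2 : ∀ i, i < 2*k →
      (∃ t, t < k ∧ t ∉ DD i ∧ DD (i+1) = insert t (DD i) ∧ JJ (i+1) = JJ i) ∨
      (∃ s, s < k ∧ s ∉ JJ i ∧ s ∈ DD i ∧ (s+1) % k ∈ DD i ∧
        JJ (i+1) = insert s (JJ i) ∧ DD (i+1) = DD i) := by
    intro i hi
    obtain ⟨hV, hadj⟩ := Pex i (by omega)
    have hstep : SCJStep (a i) (a (i+1)) := by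
      rw [ha, ha]
      exact chain_step hc (by omega)
    have hX := hup i (by omega)
    have hYc := hup (i+1) (by omega)
    have hX' : (symmDiff (a i).adj G2.adj).card = (2*k - (i+1)) + 1 := by omega
    rcases step_analysis hk hV hadj hG2 hstep hX' hYc with
      ⟨t, htk, htD, hadj'⟩ | ⟨s, hsk, hsJ, hsD, hsD2, hadj'⟩
    · have hV' := valid_insert_D hV htk
      left
      refine ⟨t, htk, htD, ?_, ?_⟩
      · rw [hDDdef]
        simp only [hadj']
        exact filter_cut_adjSet hk hV'
      · rw [hJJdef]
        simp only [hadj']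
        exact filter_join_adjSet hk hV'
    · have hV' := valid_insert_J hV hsk hsD hsD2
      right
      refine ⟨s, hsk, hsJ, hsD, hsD2, ?_, ?_⟩
      · rw [hJJdef]
        simp only [hadj']
        exact filter_join_adjSet hk hV'
      · rw [hDDdef]
        simp only [hadj']
        exact filter_cut_adjSet hk hV'
  have hmono : ∀ i j, i ≤ j → j ≤ 2*k → DD i ⊆ DD j ∧ JJ i ⊆ JJ j := by
    intro i j hij hj
    induction j, hij using Nat.le_induction with
    | base => exact ⟨subset_rfl, subset_rfl⟩
    | succ j hij ih =>
      obtain ⟨h1, h2⟩ := ih (by omega)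
      rcases hstep2 j (by omega) with ⟨t, _, _, hD, hJ⟩ | ⟨s, _, _, _, _, hJ, hD⟩
      · exact ⟨h1.trans (by rw [hD]; exact Finset.subset_insert _ _), by rw [hJ]; exact h2⟩
      · exact ⟨by rw [hD]; exact h1, h2.trans (by rw [hJ]; exact Finset.subset_insert _ _)⟩
  have sdiff_insert : ∀ (S : Finset ℕ) (t : ℕ), t ∉ S → insert t S \ S = {t} := by
    intro S t ht
    ext x
    simp only [Finset.mem_sdiff, Finset.mem_insert, Finset.mem_singleton]
    constructor
    · rintro ⟨rfl | hx, h2⟩ <;> tauto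
    · rintro rfl
      exact ⟨Or.inl rfl, ht⟩
  obtain ⟨evAt, hevdef⟩ : ∃ evAt : ℕ → ℕ, ∀ i, evAt i =
      if (JJ (i+1) \ JJ i).Nonempty then 2 * ((JJ (i+1)) \ (JJ i)).sum id + 1
      else 2 * ((DD (i+1)) \ (DD i)).sum id := ⟨_, fun _ => rfl⟩
  have hev : ∀ i, i < 2*k →
      (∃ t, t < k ∧ evAt i = 2*t ∧ t ∉ DD i ∧ DD (i+1) = insert t (DD i) ∧ JJ (i+1) = JJ i) ∨
      (∃ s, s < k ∧ evAt i = 2*s+1 ∧ s ∉ JJ i ∧ s ∈ DD i ∧ (s+1) % k ∈ DD i ∧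
        JJ (i+1) = insert s (JJ i) ∧ DD (i+1) = DD i) := by
    intro i hi
    rcases hstep2 i hi with ⟨t, h1, h2, h3, h4⟩ | ⟨s, h1, h2, h3, h4, h5, h6⟩
    · left
      refine ⟨t, h1, ?_, h2, h3, h4⟩
      rw [hevdef, h4, Finset.sdiff_self, if_neg (by simp), h3, sdiff_insert _ _ h2,
        Finset.sum_singleton]
      rfl
    · right
      refine ⟨s, h1, ?_, h2, h3, h4, h5, h6⟩
      rw [hevdef, h5, sdiff_insert _ _ h2, if_pos (Finset.singleton_nonempty s),
        Finset.sum_singleton]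
      rfl
  have hevlt : ∀ i, i < 2*k → evAt i < 2*k := by
    intro i hi
    rcases hev i hi with ⟨t, h1, h2, _⟩ | ⟨s, h1, h2, _⟩ <;> omega
  have hevinjlt : ∀ i j, i < j → j < 2*k → evAt i = evAt j → False := by
    intro i j hij hj heq
    rcases hev i (by omega) with ⟨t, h1, h2, h3, h4, h5⟩ | ⟨s, h1, h2, h3, h4, h5, h6, h7⟩
    · rcases hev j hj with ⟨t', h1', h2', h3', h4', h5'⟩ | ⟨s', h1', h2', _⟩
      · have htt : t = t' := by omega
        subst htt
        exact h3' ((hmono (i+1) j (by omega) (by omega)).1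
          (by rw [h4]; exact Finset.mem_insert_self _ _))
      · omega
    · rcases hev j hj with ⟨t', h1', h2', _⟩ | ⟨s', h1', h2', h3', _⟩
      · omega
      · have hss : s = s' := by omega
        subst hss
        exact h3' ((hmono (i+1) j (by omega) (by omega)).2
          (by rw [h6]; exact Finset.mem_insert_self _ _))
  have hinj : Function.Injective (fun i : Fin (2*k) => (⟨evAt i, hevlt i i.isLt⟩ : Fin (2*k))) := by
    intro i j h
    have h2 := congrArg Fin.val h
    simp only at h2
    apply Fin.ext
    rcases lt_trichotomy (i : ℕ) (j : ℕ) with h3 | h3 | h3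
    · exact absurd h2 (fun h2 => hevinjlt _ _ h3 j.isLt h2)
    · exact h3
    · exact absurd h2.symm (fun h2 => hevinjlt _ _ h3 i.isLt h2)
  obtain ⟨σ, hσdef⟩ : ∃ σ : Equiv.Perm (Fin (2*k)),
      σ = Equiv.ofBijective _ ((Finite.injective_iff_bijective).mp hinj) := ⟨_, rfl⟩
  obtain ⟨τ, hτdef⟩ : ∃ τ : Equiv.Perm (Fin (2*k)), τ = σ.symm := ⟨_, rfl⟩
  have hσap : ∀ (i : Fin (2*k)), (σ i : ℕ) = evAt i := by
    intro i
    rw [hσdef]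
    rfl
  have hround : ∀ e (he : e < 2*k), evAt (nu k τ e) = e := by
    intro e he
    have hval : nu k τ e = ((τ ⟨e, he⟩ : Fin (2*k)) : ℕ) := by rw [nu, dif_pos he]
    rw [hval, ← hσap (τ ⟨e, he⟩), hτdef, Equiv.apply_symm_apply]
  have huniq : ∀ e, e < 2*k → ∀ j, j < 2*k → evAt j = e → nu k τ e = j := by
    intro e he j hj hevj
    rcases lt_trichotomy (nu k τ e) j with h | h | h
    · exact (hevinjlt _ _ h hj
        (show evAt (nu k τ e) = evAt j by rw [hround e he, hevj])).elim
    · exact h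
    · exact (hevinjlt _ _ h (nu_lt he)
        (show evAt j = evAt (nu k τ e) by rw [hround e he, hevj])).elim
  have hDDchar : ∀ i, i ≤ 2*k → ((∀ t, t < k → (t ∈ DD i ↔ ∃ j < i, evAt j = 2*t)) ∧
      (∀ s, s < k → (s ∈ JJ i ↔ ∃ j < i, evAt j = 2*s+1))) := by
    intro i
    induction i with
    | zero =>
      intro _
      rw [hDD0, hJJ0]
      simp
    | succ i ih =>
      intro hi
      obtain ⟨ihD, ihJ⟩ := ih (by omega)
      rcases hev i (by omega) with ⟨t, h1, h2, h3, h4, h5⟩ | ⟨s, h1, h2, h3, h4, h5, h6, h7⟩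
      · constructor
        · intro u hu
          rw [h4, Finset.mem_insert, ihD u hu]
          constructor
          · rintro (rfl | ⟨j, hj, hje⟩)
            · exact ⟨i, by omega, h2⟩
            · exact ⟨j, by omega, hje⟩
          · rintro ⟨j, hj, hje⟩
            rcases Nat.lt_or_ge j i with h | h
            · exact Or.inr ⟨j, h, hje⟩
            · have hji : j = i := by omega
              subst hji
              left
              omega
        · intro u hu
          rw [h5, ihJ u hu]
          constructor
          · rintro ⟨j, hj, hje⟩
            exact ⟨j, by omega, hje⟩
          · rintro ⟨j, hj, hje⟩
            rcases Nat.lt_or_ge j i with h | h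
            · exact ⟨j, h, hje⟩
            · have hji : j = i := by omega
              subst hji
              omega
      · constructor
        · intro u hu
          rw [h7, ihD u hu]
          constructor
          · rintro ⟨j, hj, hje⟩
            exact ⟨j, by omega, hje⟩
          · rintro ⟨j, hj, hje⟩
            rcases Nat.lt_or_ge j i with h | h
            · exact ⟨j, h, hje⟩
            · have hji : j = i := by omega
              subst hji
              omega
        · intro u hu
          rw [h6, Finset.mem_insert, ihJ u hu]
          constructor
          · rintro (rfl | ⟨j, hj, hje⟩)
            · exact ⟨i, by omega, h2⟩
            · exact ⟨j, by omega, hje⟩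
          · rintro ⟨j, hj, hje⟩
            rcases Nat.lt_or_ge j i with h | h
            · exact Or.inr ⟨j, h, hje⟩
            · have hji : j = i := by omega
              subst hji
              left
              omega
  have hnulti : ∀ e, e < 2*k → ∀ i, i ≤ 2*k → (nu k τ e < i ↔ ∃ j < i, evAt j = e) := by
    intro e he i hi
    constructor
    · intro h
      exact ⟨nu k τ e, h, hround e he⟩
    · rintro ⟨j, hj, hje⟩
      rw [huniq e he j (by omega) hje]
      exact hj
  have hDset : ∀ i, i ≤ 2*k → Dset k τ i = DD i ∧ Jset k τ i = JJ i := by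
    intro i hi
    constructor
    · ext t
      simp only [Dset, Finset.mem_filter, Finset.mem_range]
      constructor
      · rintro ⟨ht, hlt⟩
        exact ((hDDchar i hi).1 t ht).mpr ((hnulti (2*t) (by omega) i hi).mp hlt)
      · intro hmem
        have ht : t < k := Finset.mem_range.mp ((Pex i hi).1.1 hmem)
        exact ⟨ht, (hnulti (2*t) (by omega) i hi).mpr (((hDDchar i hi).1 t ht).mp hmem)⟩
    · ext t
      simp only [Jset, Finset.mem_filter, Finset.mem_range]
      constructor
      · rintro ⟨ht, hlt⟩
        exact ((hDDchar i hi).2 t ht).mpr ((hnulti (2*t+1) (by omega) i hi).mp hlt)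
      · intro hmem
        have ht : t < k := Finset.mem_range.mp ((Pex i hi).1.2.1 hmem)
        exact ⟨ht, (hnulti (2*t+1) (by omega) i hi).mpr (((hDDchar i hi).2 t ht).mp hmem)⟩
  have hQ : Q k τ := by
    intro t ht
    have he1 : 2*t+1 < 2*k := by omega
    have hilt : nu k τ (2*t+1) < 2*k := nu_lt he1
    have hevi : evAt (nu k τ (2*t+1)) = 2*t+1 := hround _ he1
    rcases hev _ hilt with ⟨t', _, h2', _⟩ | ⟨s, h1', h2', h3', h4', h5', h6', h7'⟩
    · omega
    · have hst : s = t := by omega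
      subst hst
      constructor
      · obtain ⟨j, hj, hje⟩ := ((hDDchar _ (by omega)).1 s h1').mp h4'
        have := huniq (2*s) (by omega) j (by omega) hje
        omega
      · have hmod : (2*s+2) % (2*k) = 2*((s+1)%k) := by
          rw [show 2*s+2 = 2*(s+1) by ring, two_mul_mod]
        rw [hmod]
        have hm : (s+1)%k < k := Nat.mod_lt _ (by omega)
        obtain ⟨j, hj, hje⟩ := ((hDDchar _ (by omega)).1 _ hm).mp h5'
        have := huniq (2*((s+1)%k)) (by omega) j (by omega) hje
        omega
  refine ⟨τ, hQ, ?_⟩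
  apply List.ext_getElem
  · rw [scen_length, hlen]
  · intro i hi1 hi2
    rw [scen_length] at hi1
    have e1 : (scen k τ)[i] = mkG k (Dset k τ i) (Jset k τ i) := by
      rw [← scen_getD τ hi1, getD_eq_get (by rw [scen_length]; exact hi1), List.get_eq_getElem]
    have e2 : L[i] = a i := by
      rw [ha, getD_eq_get hi2, List.get_eq_getElem]
    rw [e1, e2]
    apply Genome.ext'
    rw [mkG_adj hk (valid_DJset hQ i), (hDset i (by omega)).1, (hDset i (by omega)).2]
    exact ((Pex i (by omega)).2).symm

/-! ### Counting: path reindexing around the cycle -/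

/-- Position of event `e` along the path obtained by cutting the cycle after event `2r`. -/
def pathIdx (k r e : ℕ) : ℕ := (e + (2*k - 2*r - 1)) % (2*k)

/-- The event at path position `j`. -/
def pe (k r j : ℕ) : ℕ := (j + (2*r + 1)) % (2*k)

theorem pe_pathIdx {k r e : ℕ} (hr : r < k) (he : e < 2*k) : pe k r (pathIdx k r e) = e := by
  rw [pe, pathIdx, Nat.mod_add_mod, show e + (2*k - 2*r - 1) + (2*r+1) = e + 2*k by omega,
    Nat.add_mod_right, Nat.mod_eq_of_lt he]

theorem pathIdx_pe {k r j : ℕ} (hr : r < k) (hj : j < 2*k) : pathIdx k r (pe k r j) = j := by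
  rw [pe, pathIdx, Nat.mod_add_mod, show j + (2*r + 1) + (2*k - 2*r - 1) = j + 2*k by omega,
    Nat.add_mod_right, Nat.mod_eq_of_lt hj]

theorem pathIdx_lt {k r e : ℕ} (hk : 1 ≤ k) : pathIdx k r e < 2*k :=
  Nat.mod_lt _ (by omega)

theorem pe_lt {k r j : ℕ} (hk : 1 ≤ k) : pe k r j < 2*k :=
  Nat.mod_lt _ (by omega)

theorem pathIdx_2r {k r : ℕ} (hr : r < k) : pathIdx k r (2*r) = 2*k - 1 := by
  rw [pathIdx, show 2*r + (2*k - 2*r - 1) = 2*k - 1 by omega]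
  exact Nat.mod_eq_of_lt (by omega)

theorem pathIdx_succ {k r e : ℕ} : pathIdx k r ((e+1) % (2*k)) = (pathIdx k r e + 1) % (2*k) := by
  rw [pathIdx, pathIdx, Nat.mod_add_mod, Nat.mod_add_mod]
  congr 1
  omega

theorem pe_succ {k r j : ℕ} : pe k r (j+1) = (pe k r j + 1) % (2*k) := by
  rw [pe, pe, Nat.mod_add_mod]
  congr 1
  omega

theorem pathIdx_parity {k r e : ℕ} (hr : r < k) : pathIdx k r e % 2 = (e+1) % 2 := by
  rw [pathIdx, Nat.mod_mod_of_dvd _ ⟨k, rfl⟩]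
  omega

theorem pe_parity {k r j : ℕ} (hr : r < k) : pe k r j % 2 = (j+1) % 2 := by
  rw [pe, Nat.mod_mod_of_dvd _ ⟨k, rfl⟩]
  omega

theorem pathIdx_inj {k r e e' : ℕ} (hr : r < k) (he : e < 2*k) (he' : e' < 2*k)
    (h : pathIdx k r e = pathIdx k r e') : e = e' := by
  rw [← pe_pathIdx hr he, ← pe_pathIdx hr he', h]

theorem pathIdx_lt_pred {k r e : ℕ} (hr : r < k) (he : e < 2*k) (hne : e ≠ 2*r) :
    pathIdx k r e < 2*k - 1 := by
  have h1 : pathIdx k r e < 2*k := pathIdx_lt (by omega)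
  have h2 : pathIdx k r e ≠ 2*k - 1 := by
    intro heq
    exact hne (pathIdx_inj hr he (by omega) (by rw [heq, pathIdx_2r hr]))
  omega

/-! ### The forward bijection -/

/-- The event-to-time permutation associated to `(r, c)`: event `2r` gets time `0`, the
event at path position `j` gets time `2k-1 - c j`. -/
def fwdFun (k r : ℕ) (hr : r < k) (c : Equiv.Perm (Fin (2*k-1))) (e : Fin (2*k)) :
    Fin (2*k) :=
  if h : (e : ℕ) = 2*r then ⟨0, by omega⟩
  else ⟨2*k - 1 - (c ⟨pathIdx k r e, pathIdx_lt_pred hr e.isLt h⟩ : ℕ), by omega⟩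

theorem fwdFun_2r {k r : ℕ} (hr : r < k) (c : Equiv.Perm (Fin (2*k-1))) (e : Fin (2*k))
    (h : (e : ℕ) = 2*r) : (fwdFun k r hr c e : ℕ) = 0 := by
  rw [fwdFun, dif_pos h]

theorem fwdFun_ne {k r : ℕ} (hr : r < k) (c : Equiv.Perm (Fin (2*k-1))) (e : Fin (2*k))
    (h : (e : ℕ) ≠ 2*r) (pf : pathIdx k r (e : ℕ) < 2*k - 1) :
    (fwdFun k r hr c e : ℕ) = 2*k - 1 - (c ⟨pathIdx k r (e : ℕ), pf⟩ : ℕ) := by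
  rw [fwdFun, dif_neg h]

theorem fwdFun_inj {k r : ℕ} (hr : r < k) (c : Equiv.Perm (Fin (2*k-1))) :
    Function.Injective (fwdFun k r hr c) := by
  intro e e' h
  have hval := congrArg Fin.val h
  by_cases h1 : (e : ℕ) = 2*r <;> by_cases h2 : (e' : ℕ) = 2*r
  · exact Fin.ext (by rw [h1, h2])
  · rw [fwdFun_2r hr c e h1, fwdFun_ne hr c e' h2 (pathIdx_lt_pred hr e'.isLt h2)] at hval
    have := (c ⟨pathIdx k r (e' : ℕ), pathIdx_lt_pred hr e'.isLt h2⟩).isLt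
    omega
  · rw [fwdFun_2r hr c e' h2, fwdFun_ne hr c e h1 (pathIdx_lt_pred hr e.isLt h1)] at hval
    have := (c ⟨pathIdx k r (e : ℕ), pathIdx_lt_pred hr e.isLt h1⟩).isLt
    omega
  · rw [fwdFun_ne hr c e h1 (pathIdx_lt_pred hr e.isLt h1),
      fwdFun_ne hr c e' h2 (pathIdx_lt_pred hr e'.isLt h2)] at hval
    have b1 := (c ⟨pathIdx k r (e : ℕ), pathIdx_lt_pred hr e.isLt h1⟩).isLt
    have b2 := (c ⟨pathIdx k r (e' : ℕ), pathIdx_lt_pred hr e'.isLt h2⟩).isLt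
    have hcc : (c ⟨pathIdx k r (e : ℕ), pathIdx_lt_pred hr e.isLt h1⟩ : ℕ)
        = (c ⟨pathIdx k r (e' : ℕ), pathIdx_lt_pred hr e'.isLt h2⟩ : ℕ) := by omega
    have := c.injective (Fin.ext hcc)
    have hpi : pathIdx k r (e : ℕ) = pathIdx k r (e' : ℕ) := Fin.mk.inj_iff.mp this
    exact Fin.ext (pathIdx_inj hr e.isLt e'.isLt hpi)

/-- The permutation `τ` associated to `(r, c)`. -/
noncomputable def fwdPerm (k r : ℕ) (hr : r < k) (c : Equiv.Perm (Fin (2*k-1))) :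
    Equiv.Perm (Fin (2*k)) :=
  Equiv.ofBijective _ ((Finite.injective_iff_bijective).mp (fwdFun_inj hr c))

theorem nu_fwdPerm {k r : ℕ} (hr : r < k) (c : Equiv.Perm (Fin (2*k-1))) {e : ℕ}
    (he : e < 2*k) :
    nu k (fwdPerm k r hr c) e = (fwdFun k r hr c ⟨e, he⟩ : ℕ) := by
  rw [nu, dif_pos he]
  rfl

/-- Value of `c` as a function `ℕ → ℕ`. -/
def cval (k : ℕ) (c : Equiv.Perm (Fin (2*k-1))) (m : ℕ) : ℕ :=
  if h : m < 2*k-1 then (c ⟨m, h⟩ : ℕ) else 0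

theorem cval_lt {k : ℕ} (c : Equiv.Perm (Fin (2*k-1))) {m : ℕ} (h : m < 2*k-1) :
    cval k c m < 2*k-1 := by
  rw [cval, dif_pos h]
  exact (c ⟨m, h⟩).isLt

theorem cval_inj {k : ℕ} (c : Equiv.Perm (Fin (2*k-1))) {m m' : ℕ} (h : m < 2*k-1)
    (h' : m' < 2*k-1) (heq : cval k c m = cval k c m') : m = m' := by
  unfold cval at heq
  rw [dif_pos h, dif_pos h'] at heq
  exact Fin.mk.inj_iff.mp (c.injective (Fin.ext heq))

theorem cval_alt_even {k : ℕ} {c : Equiv.Perm (Fin (2*k-1))} (hc : IsAltPerm c) {i : ℕ}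
    (h : i+1 < 2*k-1) (hpar : i % 2 = 0) : cval k c i < cval k c (i+1) := by
  have halt := hc i h
  rw [if_pos hpar] at halt
  rw [cval, cval, dif_pos (by omega : i < 2*k-1), dif_pos h]
  exact halt

theorem cval_alt_odd {k : ℕ} {c : Equiv.Perm (Fin (2*k-1))} (hc : IsAltPerm c) {i : ℕ}
    (h : i+1 < 2*k-1) (hpar : i % 2 = 1) : cval k c (i+1) < cval k c i := by
  have halt := hc i h
  rw [if_neg (by omega)] at halt
  rw [cval, cval, dif_pos (by omega : i < 2*k-1), dif_pos h]
  exact halt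

theorem nu_fwd_ne {k r : ℕ} (hr : r < k) (c : Equiv.Perm (Fin (2*k-1))) {e : ℕ}
    (he : e < 2*k) (hne : e ≠ 2*r) :
    nu k (fwdPerm k r hr c) e = 2*k - 1 - cval k c (pathIdx k r e) := by
  rw [nu_fwdPerm hr c he, fwdFun_ne hr c _ hne (pathIdx_lt_pred hr he hne), cval,
    dif_pos (pathIdx_lt_pred hr he hne)]

theorem nu_fwd_2r {k r : ℕ} (hr : r < k) (c : Equiv.Perm (Fin (2*k-1))) :
    nu k (fwdPerm k r hr c) (2*r) = 0 := by
  rw [nu_fwdPerm hr c (by omega)]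
  exact fwdFun_2r hr c _ rfl

theorem Q_fwdPerm {k r : ℕ} (hr : r < k) {c : Equiv.Perm (Fin (2*k-1))} (hc : IsAltPerm c) :
    Q k (fwdPerm k r hr c) := by
  intro t ht
  have hne1 : 2*t+1 ≠ 2*r := by omega
  have hj : pathIdx k r (2*t+1) < 2*k-1 := pathIdx_lt_pred hr (by omega) hne1
  have hjpar : pathIdx k r (2*t+1) % 2 = 0 := by rw [pathIdx_parity hr]; omega
  have nu1 := nu_fwd_ne hr c (show 2*t+1 < 2*k by omega) hne1
  have hcb := cval_lt c hj
  constructor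
  · by_cases hteq : t = r
    · have nu0 : nu k (fwdPerm k r hr c) (2*t) = 0 := by
        rw [show 2*t = 2*r by omega]
        exact nu_fwd_2r hr c
      rw [nu0, nu1]
      omega
    · have hne0 : 2*t ≠ 2*r := by omega
      have hx : pathIdx k r (2*t) < 2*k-1 := pathIdx_lt_pred hr (by omega) hne0
      have hxj : pathIdx k r (2*t+1) = pathIdx k r (2*t) + 1 := by
        have h1 := pathIdx_succ (k := k) (r := r) (e := 2*t)
        rw [Nat.mod_eq_of_lt (show 2*t+1 < 2*k by omega)] at h1
        rw [h1, Nat.mod_eq_of_lt (by omega)]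
      have hxpar : pathIdx k r (2*t) % 2 = 1 := by rw [pathIdx_parity hr]; omega
      have halt := cval_alt_odd hc (show pathIdx k r (2*t) + 1 < 2*k-1 by omega) hxpar
      have hxb := cval_lt c hx
      rw [nu_fwd_ne hr c (show 2*t < 2*k by omega) hne0, nu1, hxj]
      omega
  · have hmlt : (t+1) % k < k := Nat.mod_lt _ (by omega)
    have he2 : (2*t+2) % (2*k) = 2*((t+1) % k) := by
      rw [show 2*t+2 = 2*(t+1) by ring, two_mul_mod]
    rw [he2]
    by_cases hmeq : (t+1) % k = r
    · have nu0 : nu k (fwdPerm k r hr c) (2*((t+1) % k)) = 0 := by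
        rw [hmeq]
        exact nu_fwd_2r hr c
      rw [nu0, nu1]
      omega
    · have hne2 : 2*((t+1) % k) ≠ 2*r := by omega
      have hyj : pathIdx k r (2*((t+1) % k)) = pathIdx k r (2*t+1) + 1 := by
        have h1 := pathIdx_succ (k := k) (r := r) (e := 2*t+1)
        rw [he2] at h1
        rw [h1, Nat.mod_eq_of_lt (by omega)]
      have hy : pathIdx k r (2*((t+1) % k)) < 2*k-1 :=
        pathIdx_lt_pred hr (by omega) hne2
      have halt := cval_alt_even hc (show pathIdx k r (2*t+1) + 1 < 2*k-1 by omega) hjpar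
      have hyb : cval k c (pathIdx k r (2*t+1) + 1) < 2*k - 1 := by
        rw [← hyj]
        exact cval_lt c hy
      rw [nu_fwd_ne hr c (show 2*((t+1) % k) < 2*k by omega) hne2, nu1, hyj]
      omega

theorem nu_pe_pos {k r : ℕ} {τ : Equiv.Perm (Fin (2*k))} (hr : r < k)
    (h0 : nu k τ (2*r) = 0) {j : ℕ} (hj : j < 2*k-1) :
    1 ≤ nu k τ (pe k r j) ∧ nu k τ (pe k r j) < 2*k := by
  have hk1 : 1 ≤ k := by omega
  have hpe : pe k r j < 2*k := pe_lt hk1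
  refine ⟨?_, nu_lt hpe⟩
  by_contra h
  have h2 : nu k τ (pe k r j) = 0 := by omega
  have h3 : pe k r j = 2*r := nu_inj hpe (by omega) (by rw [h2, h0])
  have h4 := pathIdx_pe hr (r := r) (j := j) (by omega)
  rw [h3, pathIdx_2r hr] at h4
  omega

theorem fwd_surj {k : ℕ} (hk : 1 ≤ k) (τ : Equiv.Perm (Fin (2*k))) (hQ : Q k τ) :
    ∃ (r : ℕ) (hr : r < k) (c : Equiv.Perm (Fin (2*k-1))),
      IsAltPerm c ∧ fwdPerm k r hr c = τ := by
  classical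
  obtain ⟨e0, he0, hnue0⟩ : ∃ e0, e0 < 2*k ∧ nu k τ e0 = 0 :=
    ⟨(τ.symm ⟨0, by omega⟩ : ℕ), (τ.symm _).isLt, nu_symm (by omega)⟩
  have he0even : e0 % 2 = 0 := by
    by_contra hodd
    obtain ⟨t, ht⟩ : ∃ t, e0 = 2*t+1 := ⟨e0/2, by omega⟩
    have h1 := (hQ t (by omega)).1
    rw [← ht, hnue0] at h1
    omega
  obtain ⟨r, hre⟩ : ∃ r, e0 = 2*r := ⟨e0/2, by omega⟩
  have hr : r < k := by omega
  have h0 : nu k τ (2*r) = 0 := by rw [← hre]; exact hnue0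
  have cpf : ∀ j : Fin (2*k-1), 2*k-1 - nu k τ (pe k r (j : ℕ)) < 2*k-1 := by
    intro j
    have := nu_pe_pos hr h0 j.isLt
    omega
  have hcinj : Function.Injective (fun j : Fin (2*k-1) =>
      (⟨2*k-1 - nu k τ (pe k r (j : ℕ)), cpf j⟩ : Fin (2*k-1))) := by
    intro j j' h
    have hval := congrArg Fin.val h
    simp only at hval
    have b1 := nu_pe_pos hr h0 j.isLt
    have b2 := nu_pe_pos hr h0 j'.isLt
    have hnueq : nu k τ (pe k r (j : ℕ)) = nu k τ (pe k r (j' : ℕ)) := by omega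
    have hpe : pe k r (j : ℕ) = pe k r (j' : ℕ) := nu_inj (pe_lt hk) (pe_lt hk) hnueq
    apply Fin.ext
    rw [← pathIdx_pe hr (show (j : ℕ) < 2*k by omega),
      ← pathIdx_pe hr (show (j' : ℕ) < 2*k by omega), hpe]
  obtain ⟨c, hcdef⟩ : ∃ c : Equiv.Perm (Fin (2*k-1)),
      c = Equiv.ofBijective _ ((Finite.injective_iff_bijective).mp hcinj) := ⟨_, rfl⟩
  have hcval : ∀ j, ∀ hj : j < 2*k-1, cval k c j = 2*k-1 - nu k τ (pe k r j) := by
    intro j hj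
    rw [cval, dif_pos hj, hcdef]
    rfl
  have hcalt : IsAltPerm c := by
    intro i h
    have hilt : i < 2*k-1 := by omega
    have b1 := nu_pe_pos hr h0 hilt
    have b2 := nu_pe_pos hr h0 h
    by_cases hpar : i % 2 = 0
    · rw [if_pos hpar, hcdef, Fin.lt_def]
      show 2*k-1 - nu k τ (pe k r i) < 2*k-1 - nu k τ (pe k r (i+1))
      have hpodd : pe k r i % 2 = 1 := by rw [pe_parity hr]; omega
      obtain ⟨s, hs⟩ : ∃ s, pe k r i = 2*s+1 := ⟨(pe k r i)/2, by omega⟩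
      have hsk : s < k := by
        have := pe_lt (k := k) (r := r) (j := i) hk
        omega
      have hQ2 := (hQ s hsk).2
      have hpe1 : (2*s+2) % (2*k) = pe k r (i+1) := by
        rw [pe_succ, hs, show 2*s+1+1 = 2*s+2 by ring]
      rw [hpe1, ← hs] at hQ2
      omega
    · rw [if_neg hpar, hcdef, Fin.lt_def]
      show 2*k-1 - nu k τ (pe k r (i+1)) < 2*k-1 - nu k τ (pe k r i)
      have hpeven : pe k r i % 2 = 0 := by rw [pe_parity hr]; omega
      have hplt : pe k r i < 2*k := pe_lt hk
      have hpe1 : pe k r (i+1) = pe k r i + 1 := by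
        rw [pe_succ, Nat.mod_eq_of_lt (by omega)]
      obtain ⟨s, hs⟩ : ∃ s, pe k r i = 2*s := ⟨(pe k r i)/2, by omega⟩
      have hsk : s < k := by omega
      have hQ1 := (hQ s hsk).1
      rw [← hs] at hQ1
      rw [← hpe1] at hQ1
      omega
  refine ⟨r, hr, c, hcalt, ?_⟩
  apply Equiv.ext
  intro e
  apply Fin.ext
  have he := e.isLt
  rw [← nu_coe (τ := fwdPerm k r hr c) e, ← nu_coe (τ := τ) e]
  by_cases h2 : (e : ℕ) = 2*r
  · rw [h2, nu_fwd_2r hr c, h0]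
  · have hpi : pathIdx k r (e : ℕ) < 2*k-1 := pathIdx_lt_pred hr he h2
    rw [nu_fwd_ne hr c he h2, hcval _ hpi, pe_pathIdx hr he]
    have := nu_lt (τ := τ) he
    omega

theorem fwdPerm_inj {k : ℕ} {r r' : ℕ} (hr : r < k) (hr' : r' < k)
    {c c' : Equiv.Perm (Fin (2*k-1))}
    (h : fwdPerm k r hr c = fwdPerm k r' hr' c') : r = r' ∧ c = c' := by
  have hk : 1 ≤ k := by omega
  have hrr : r = r' := by
    by_contra hne
    have hval : nu k (fwdPerm k r hr c) (2*r) = nu k (fwdPerm k r' hr' c') (2*r) := by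
      rw [h]
    rw [nu_fwd_2r hr c, nu_fwd_ne hr' c' (by omega) (by omega)] at hval
    have := cval_lt c' (pathIdx_lt_pred hr' (show 2*r < 2*k by omega) (by omega))
    omega
  subst hrr
  refine ⟨rfl, ?_⟩
  apply Equiv.ext
  intro j
  have hj := j.isLt
  have hpej : pe k r (j : ℕ) < 2*k := pe_lt hk
  have hpene : pe k r (j : ℕ) ≠ 2*r := by
    intro heq
    have h4 := pathIdx_pe hr (r := r) (j := (j : ℕ)) (by omega)
    rw [heq, pathIdx_2r hr] at h4
    omega
  have hval : nu k (fwdPerm k r hr c) (pe k r (j:ℕ))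
      = nu k (fwdPerm k r hr c') (pe k r (j:ℕ)) := by rw [h]
  rw [nu_fwd_ne hr c hpej hpene, nu_fwd_ne hr c' hpej hpene,
    pathIdx_pe hr (show (j:ℕ) < 2*k by omega)] at hval
  have b1 := cval_lt c hj
  have b2 := cval_lt c' hj
  have hcc : cval k c (j : ℕ) = cval k c' (j : ℕ) := by omega
  unfold cval at hcc
  rw [dif_pos hj, dif_pos hj, Fin.eta] at hcc
  exact Fin.ext hcc

theorem card_Q {k : ℕ} (hk : 1 ≤ k) :
    Nat.card {τ : Equiv.Perm (Fin (2*k)) // Q k τ} = k * altPermCount (2*k-1) := by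
  have hbij : Function.Bijective
      (fun p : Fin k × {c : Equiv.Perm (Fin (2*k-1)) // IsAltPerm c} =>
        (⟨fwdPerm k p.1 p.1.isLt p.2.1, Q_fwdPerm p.1.isLt p.2.2⟩
          : {τ : Equiv.Perm (Fin (2*k)) // Q k τ})) := by
    constructor
    · rintro ⟨r, c, hc⟩ ⟨r', c', hc'⟩ h
      have heq := congrArg Subtype.val h
      simp only at heq
      obtain ⟨h1, h2⟩ := fwdPerm_inj r.isLt r'.isLt heq
      exact Prod.ext (Fin.ext h1) (Subtype.ext h2)
    · rintro ⟨τ, hQ⟩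
      obtain ⟨r, hr, c, hc, heq⟩ := fwd_surj hk τ hQ
      exact ⟨(⟨r, hr⟩, ⟨c, hc⟩), Subtype.ext heq⟩
  have hcard := Nat.card_eq_of_bijective _ hbij
  rw [← hcard, Nat.card_prod, altPermCount]
  simp

theorem numMPS_eq {k : ℕ} (hk : 2 ≤ k) {G1 G2 : Genome ℕ}
    (hG1 : G1.adj = adjSet k ∅ ∅) (hG2 : G2.adj = adjSet k (range k) (range k)) :
    NumMPS G1 G2 = Nat.card {τ : Equiv.Perm (Fin (2*k)) // Q k τ} := by
  have hmps : ∀ τ : {τ : Equiv.Perm (Fin (2*k)) // Q k τ}, IsMPS G1 G2 (scen k τ.1) := by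
    intro τ
    rw [isMPS_iff hk hG1 hG2]
    exact ⟨scen_isScenario hk τ.2 hG1 hG2, scen_length _⟩
  have hbij : Function.Bijective (fun τ : {τ : Equiv.Perm (Fin (2*k)) // Q k τ} =>
      (⟨scen k τ.1, hmps τ⟩ : {L : List (Genome ℕ) // L ∈ {L | IsMPS G1 G2 L}})) := by
    constructor
    · intro τ τ' h
      exact Subtype.ext (scen_inj hk τ.2 τ'.2 (congrArg Subtype.val h))
    · rintro ⟨L, hL⟩
      rw [Set.mem_setOf_eq, isMPS_iff hk hG1 hG2] at hL
      obtain ⟨τ', hQ', heq⟩ := exists_tau_of_scenario hk hG1 hG2 hL.1 hL.2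
      exact ⟨⟨τ', hQ'⟩, Subtype.ext heq⟩
  rw [NumMPS, ← Nat.card_coe_set_eq]
  exact (Nat.card_eq_of_bijective _ hbij).symm


end SCJAux

theorem altPermCount_one : altPermCount 1 = 1 := by
  have halt : ∀ c : Equiv.Perm (Fin 1), IsAltPerm c := by
    intro c i h
    omega
  rw [altPermCount, Nat.card_congr (Equiv.subtypeUnivEquiv halt),
    Nat.card_eq_fintype_card, Fintype.card_perm]
  simp

theorem cycle_count (k : ℕ) (hk : 1 ≤ k) (G1 G2 : Genome ℕ)
    (h1 : G1.adj = (Finset.Icc 1 k).image fun t => s(2 * t - 1, 2 * t))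
    (h2 : G2.adj = (Finset.Icc 1 k).image fun t => s(2 * t, (2 * t) % (2 * k) + 1)) :
    NumMPS G1 G2 = k * altPermCount (2 * k - 1) := by
  rcases eq_or_lt_of_le hk with hk1 | hk2
  · -- degenerate case `k = 1`: the two genomes coincide
    have hkk : k = 1 := hk1.symm
    subst hkk
    have hGG : G1 = G2 := by
      apply SCJAux.Genome.ext'
      rw [h1, h2]
      norm_num
    have hmem : 0 ∈ {n | ∃ L, IsScenario G1 G2 L ∧ L.length = n + 1} :=
      ⟨[G1], ⟨rfl, by rw [hGG]; rfl, List.isChain_singleton _⟩, rfl⟩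
    have hd : dSCJ G1 G2 = 0 := Nat.le_antisymm (Nat.sInf_le hmem) (Nat.zero_le _)
    have hset : {L | IsMPS G1 G2 L} = {[G1]} := by
      ext L
      simp only [Set.mem_setOf_eq, Set.mem_singleton_iff, IsMPS, hd]
      constructor
      · rintro ⟨⟨hh, hl, hc⟩, hlen⟩
        obtain ⟨x, rfl⟩ : ∃ x, L = [x] := by
          cases L with
          | nil => simp at hlen
          | cons a l =>
            cases l with
            | nil => exact ⟨a, rfl⟩
            | cons b l' => simp at hlen
        simp only [List.head?_cons, Option.some.injEq] at hh
        rw [hh]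
      · rintro rfl
        exact ⟨⟨rfl, by rw [hGG]; rfl, List.isChain_singleton _⟩, rfl⟩
    rw [NumMPS, hset, Set.ncard_singleton]
    norm_num [altPermCount_one]
  · have hk2' : 2 ≤ k := hk2
    rw [SCJAux.numMPS_eq hk2' (SCJAux.G1_adj_eq h1) (SCJAux.G2_adj_eq h2),
      SCJAux.card_Q (by omega : 1 ≤ k)]
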